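/- Let b : (0,∞) → ℝ be twice continuously differentiable, let u ∈ ℝ and ϱ_in, ϱ_out > 0, and define the upwind value ϱ^up := ϱ_in if u ≥ 0 and ϱ^up := ϱ_out if u < 0. Then there exists ζ in the closed interval with endpoints ϱ_in and ϱ_out such that: u ϱ^up ( b'(ϱ_out) − b'(ϱ_in) ) = u [ (ϱ_out b'(ϱ_out) − b(ϱ_out)) − (ϱ_in b'(ϱ_in) − b(ϱ_in)) ] − (1/2) |u| b''(ζ) (ϱ_out − ϱ_in)². -/

import Mathlib

/-- Second-order Taylor expansion with Lagrange remainder, valid in both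
directions, proved via Rolle's theorem. -/
theorem taylor_aux_stmt12 (b b' b'' : ℝ → ℝ)
    (hb' : ∀ x ∈ Set.Ioi (0 : ℝ), HasDerivAt b (b' x) x)
    (hb'' : ∀ x ∈ Set.Ioi (0 : ℝ), HasDerivAt b' (b'' x) x)
    (a c : ℝ) (ha : 0 < a) (hc : 0 < c) :
    ∃ ζ ∈ Set.uIcc a c,
      b c - b a - b' a * (c - a) = 1 / 2 * b'' ζ * (c - a) ^ 2 := by
  rcases eq_or_ne a c with rfl | hne
  · exact ⟨a, Set.left_mem_uIcc, by ring⟩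
  have hca : c - a ≠ 0 := sub_ne_zero.mpr (Ne.symm hne)
  set M := (b c - b a - b' a * (c - a)) / (c - a) ^ 2 with hM
  set g : ℝ → ℝ := fun t => b c - b t - b' t * (c - t) - M * (c - t) ^ 2 with hg
  have hsub : Set.uIcc a c ⊆ Set.Ioi 0 := fun x hx =>
    lt_of_lt_of_le (lt_min ha hc) hx.1
  have hg' : ∀ t ∈ Set.Ioi (0 : ℝ),
      HasDerivAt g ((c - t) * (2 * M - b'' t)) t := by
    intro t ht
    have h1 := hb' t ht
    have h2 := hb'' t ht
    have hct : HasDerivAt (fun x : ℝ => c - x) (-1) t :=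
      (hasDerivAt_id t).const_sub c
    have h3 : HasDerivAt g
        (0 - b' t - (b'' t * (c - t) + b' t * (-1)) -
          M * ((2 : ℕ) * (c - t) ^ (2 - 1) * (-1))) t :=
      (((hasDerivAt_const t (b c)).sub h1).sub (h2.mul hct)).sub
        ((hct.pow 2).const_mul M)
    convert h3 using 1
    push_cast
    ring
  have hMeq : M * (c - a) ^ 2 = b c - b a - b' a * (c - a) := by
    rw [hM, div_mul_cancel₀]
    exact pow_ne_zero 2 hca
  have hga : g a = 0 := by simp only [hg]; linarith [hMeq]
  have hgc : g c = 0 := by simp [hg]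
  have key : ∃ ζ ∈ Set.uIcc a c, (c - ζ) * (2 * M - b'' ζ) = 0 ∧ ζ ≠ c := by
    rcases hne.lt_or_gt with h | h
    · obtain ⟨ζ, hζ, hz⟩ := exists_hasDerivAt_eq_zero h
        (fun t ht => (hg' t (hsub (by rw [Set.uIcc_of_le h.le]; exact ht))).continuousAt.continuousWithinAt)
        (hga.trans hgc.symm)
        (fun t ht => hg' t (hsub (by rw [Set.uIcc_of_le h.le]; exact Set.Ioo_subset_Icc_self ht)))
      exact ⟨ζ, by rw [Set.uIcc_of_le h.le]; exact Set.Ioo_subset_Icc_self hζ,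
        hz, ne_of_lt hζ.2⟩
    · obtain ⟨ζ, hζ, hz⟩ := exists_hasDerivAt_eq_zero h
        (fun t ht => (hg' t (hsub (by rw [Set.uIcc_of_ge h.le]; exact ht))).continuousAt.continuousWithinAt)
        (hgc.trans hga.symm)
        (fun t ht => hg' t (hsub (by rw [Set.uIcc_of_ge h.le]; exact Set.Ioo_subset_Icc_self ht)))
      exact ⟨ζ, by rw [Set.uIcc_of_ge h.le]; exact Set.Ioo_subset_Icc_self hζ,
        hz, ne_of_gt hζ.1⟩
  obtain ⟨ζ, hζmem, hz, hζc⟩ := key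
  have hb2 : b'' ζ = 2 * M := by
    rcases mul_eq_zero.mp hz with h | h
    · exact absurd (sub_eq_zero.mp h).symm hζc
    · linarith
  exact ⟨ζ, hζmem, by rw [hb2]; linarith [hMeq]⟩

/-- Per-face core of the renormalized discrete continuity equation: if `b` is
twice continuously differentiable on `(0,∞)` (with derivative `b'` and second
derivative `b''`), then for `ϱ_in, ϱ_out > 0` there exists an intermediate
point `ζ` between `ϱ_in` and `ϱ_out` with
`u ϱ^up (b'(ϱ_out) - b'(ϱ_in))
  = u [(ϱ_out b'(ϱ_out) - b(ϱ_out)) - (ϱ_in b'(ϱ_in) - b(ϱ_in))]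
    - (1/2) |u| b''(ζ) (ϱ_out - ϱ_in)²`. -/
theorem stmt_12 (b b' b'' : ℝ → ℝ)
    (hb' : ∀ x ∈ Set.Ioi (0 : ℝ), HasDerivAt b (b' x) x)
    (hb'' : ∀ x ∈ Set.Ioi (0 : ℝ), HasDerivAt b' (b'' x) x)
    (hb''c : ContinuousOn b'' (Set.Ioi (0 : ℝ)))
    (u ϱin ϱout : ℝ) (hin : 0 < ϱin) (hout : 0 < ϱout) :
    ∃ ζ ∈ Set.uIcc ϱin ϱout,
      u * (if 0 ≤ u then ϱin else ϱout) * (b' ϱout - b' ϱin) =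
        u * ((ϱout * b' ϱout - b ϱout) - (ϱin * b' ϱin - b ϱin)) -
          1 / 2 * |u| * b'' ζ * (ϱout - ϱin) ^ 2 := by
  by_cases hu : 0 ≤ u
  · obtain ⟨ζ, hζ, h⟩ := taylor_aux_stmt12 b b' b'' hb' hb'' ϱout ϱin hout hin
    refine ⟨ζ, Set.uIcc_comm ϱout ϱin ▸ hζ, ?_⟩
    rw [if_pos hu, abs_of_nonneg hu]
    linear_combination (-u) * h
  · obtain ⟨ζ, hζ, h⟩ := taylor_aux_stmt12 b b' b'' hb' hb'' ϱin ϱout hin hout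
    refine ⟨ζ, hζ, ?_⟩
    rw [if_neg hu, abs_of_neg (not_le.mp hu)]
    linear_combination u * h
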